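/- For every n ≥ 7 and every matroid N (on any type β), there is no online matroid morphism from the class of matroids of rank at most 3 with at most n elements into N. -/

import Mathlib

open Set
set_option maxRecDepth 10000

/-- The rank of a set in a matroid: the supremum of the cardinalities of its
independent subsets. -/
noncomputable def mRank {α : Type*} (M : Matroid α) (S : Set α) : ℕ∞ :=
  ⨆ I ∈ {I : Set α | M.Indep I ∧ I ⊆ S}, I.encard

/-- The rank of a set of vectors: the dimension of its linear span. -/
noncomputable def spanRank (K : Type*) [Field K] {W : Type*} [AddCommGroup W] [Module K W]
    (S : Set W) : ℕ :=
  Module.finrank K (Submodule.span K S)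

/-- The `k`-prefix of an ordered matroid on `Fin m`: its restriction to the
first `k` elements, viewed as a matroid on `Fin k`. -/
def prefixMatroid {k m : ℕ} (h : k ≤ m) (M : Matroid (Fin m)) : Matroid (Fin k) :=
  M.comap (Fin.castLE h)

/-- An online matroid morphism (OMM) of the class `P` of ordered matroids into the host
matroid `N`: a rank-preserving map for each matroid of the class, consistent on prefixes. -/
def OMMof (P : (m : ℕ) → Matroid (Fin m) → Prop) {β : Type*} (N : Matroid β) : Prop :=
  ∃ f : (m : ℕ) → Matroid (Fin m) → (Fin m → β),
    (∀ m (M : Matroid (Fin m)), P m M →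
      ∀ S : Set (Fin m), S ⊆ M.E → mRank N (f m M '' S) = mRank M S) ∧
    (∀ k m (hkm : k ≤ m) (M : Matroid (Fin m)), P m M →
      ∀ i : Fin k, f k (prefixMatroid hkm M) i = f m M (Fin.castLE hkm i))

/-- An online matroid embedding (OME): an online matroid morphism all of whose maps are
injective. -/
def OMEof (P : (m : ℕ) → Matroid (Fin m) → Prop) {β : Type*} (N : Matroid β) : Prop :=
  ∃ f : (m : ℕ) → Matroid (Fin m) → (Fin m → β),
    (∀ m (M : Matroid (Fin m)), P m M → Function.Injective (f m M)) ∧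
    (∀ m (M : Matroid (Fin m)), P m M →
      ∀ S : Set (Fin m), S ⊆ M.E → mRank N (f m M '' S) = mRank M S) ∧
    (∀ k m (hkm : k ≤ m) (M : Matroid (Fin m)), P m M →
      ∀ i : Fin k, f k (prefixMatroid hkm M) i = f m M (Fin.castLE hkm i))

section MRankLemmas
variable {α : Type*} {M : Matroid α} {I S T X Y : Set α}

theorem le_mRank (hI : M.Indep I) (hIS : I ⊆ S) : I.encard ≤ mRank M S :=
  le_iSup₂_of_le I (show I ∈ {I : Set α | M.Indep I ∧ I ⊆ S} from ⟨hI, hIS⟩) le_rfl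

theorem mRank_le {k : ℕ∞} (h : ∀ I, M.Indep I → I ⊆ S → I.encard ≤ k) : mRank M S ≤ k :=
  iSup₂_le fun I hI => h I hI.1 hI.2

theorem mRank_mono (h : S ⊆ T) : mRank M S ≤ mRank M T :=
  mRank_le fun _ hI hIS => le_mRank hI (hIS.trans h)

theorem mRank_basis' (hI : M.IsBasis' I S) : mRank M S = I.encard := by
  refine le_antisymm (mRank_le fun J hJ hJS => ?_) (le_mRank hI.indep hI.subset)
  obtain ⟨I', hI', hJI'⟩ := hJ.subset_isBasis'_of_subset hJS
  have hcard : I'.encard = I.encard :=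
    (Matroid.isBase_restrict_iff'.2 hI').encard_eq_encard_of_isBase (Matroid.isBase_restrict_iff'.2 hI)
  exact (Set.encard_mono hJI').trans hcard.le

theorem mRank_submod (X Y : Set α) :
    mRank M (X ∪ Y) + mRank M (X ∩ Y) ≤ mRank M X + mRank M Y := by
  obtain ⟨I, hI⟩ := M.exists_isBasis' (X ∩ Y)
  obtain ⟨J, hJ, hIJ⟩ := hI.indep.subset_isBasis'_of_subset
    (hI.subset.trans (Set.inter_subset_left.trans Set.subset_union_left))
  rw [mRank_basis' hI, mRank_basis' hJ]
  have h1 : (J ∩ X).encard ≤ mRank M X :=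
    le_mRank (hJ.indep.subset inter_subset_left) inter_subset_right
  have h2 : (J ∩ Y).encard ≤ mRank M Y :=
    le_mRank (hJ.indep.subset inter_subset_left) inter_subset_right
  have hu : (J ∩ X) ∪ (J ∩ Y) = J := by
    rw [← Set.inter_union_distrib_left]
    exact Set.inter_eq_self_of_subset_left hJ.subset
  have hi : I ⊆ (J ∩ X) ∩ (J ∩ Y) := by
    refine Set.subset_inter (Set.subset_inter hIJ ?_) (Set.subset_inter hIJ ?_)
    · exact hI.subset.trans Set.inter_subset_left
    · exact hI.subset.trans Set.inter_subset_right
  calc J.encard + I.encard ≤ ((J ∩ X) ∪ (J ∩ Y)).encard + ((J ∩ X) ∩ (J ∩ Y)).encard := by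
        rw [hu]; exact add_le_add_right (Set.encard_mono hi) _
    _ = (J ∩ X).encard + (J ∩ Y).encard := Set.encard_union_add_encard_inter _ _
    _ ≤ mRank M X + mRank M Y := add_le_add h1 h2

end MRankLemmas

/-- The independence predicate of a rank-3 paving matroid on `Fin 7` determined by a
collection `bad` of dependent 3-sets. -/
def Ok (bad : Finset (Finset (Fin 7))) (F : Finset (Fin 7)) : Prop :=
  F.card ≤ 3 ∧ F ∉ bad

instance {bad : Finset (Finset (Fin 7))} : DecidablePred (Ok bad) :=
  fun _ => instDecidableAnd

theorem Ok.subset {bad : Finset (Finset (Fin 7))} (h3 : ∀ G ∈ bad, G.card = 3)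
    {I J : Finset (Fin 7)} (hJ : Ok bad J) (hIJ : I ⊆ J) : Ok bad I := by
  refine ⟨(Finset.card_le_card hIJ).trans hJ.1, fun hI => ?_⟩
  have : I = J := Finset.eq_of_subset_of_card_le hIJ (hJ.1.trans (h3 I hI).ge)
  exact hJ.2 (this ▸ hI)

theorem Ok.aug {bad : Finset (Finset (Fin 7))} (h3 : ∀ G ∈ bad, G.card = 3)
    (hpair : ∀ G ∈ bad, ∀ G' ∈ bad, G ≠ G' → (G ∩ G').card ≤ 1)
    {I J : Finset (Fin 7)} (hI : Ok bad I) (hJ : Ok bad J) (hlt : I.card < J.card) :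
    ∃ e ∈ J, e ∉ I ∧ Ok bad (insert e I) := by
  by_cases hsmall : I.card ≤ 1
  · have hns : ¬ J ⊆ I := fun h => absurd (Finset.card_le_card h) (by omega)
    obtain ⟨e, heJ, heI⟩ := Finset.not_subset.1 hns
    refine ⟨e, heJ, heI, ⟨?_, fun hbadmem => ?_⟩⟩
    · exact (Finset.card_insert_le _ _).trans (by omega)
    · have := h3 _ hbadmem
      have := Finset.card_insert_le e I
      omega
  -- I.card = 2, J.card = 3
  have hI2 : I.card = 2 := by have := hJ.1; omega
  by_contra hcon
  push_neg at hcon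
  -- every e ∈ J \ I gives insert e I ∈ bad
  have hall : ∀ e ∈ J, e ∉ I → insert e I ∈ bad := by
    intro e heJ heI
    by_contra hnb
    exact (hcon e heJ heI) ⟨(Finset.card_insert_le _ _).trans (by omega), hnb⟩
  have hns : ¬ J ⊆ I := fun h => absurd (Finset.card_le_card h) (by omega)
  obtain ⟨e, heJ, heI⟩ := Finset.not_subset.1 hns
  by_cases h2 : ∃ e' ∈ J, e' ∉ I ∧ e' ≠ e
  · obtain ⟨e', he'J, he'I, hee⟩ := h2
    have hb1 := hall e heJ heI
    have hb2 := hall e' he'J he'I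
    have hne : insert e I ≠ insert e' I := by
      intro h
      have : e ∈ insert e' I := h ▸ Finset.mem_insert_self e I
      rcases Finset.mem_insert.1 this with h' | h'
      · exact hee h'.symm
      · exact heI h'
    have hsub : I ⊆ insert e I ∩ insert e' I :=
      Finset.subset_inter (Finset.subset_insert _ _) (Finset.subset_insert _ _)
    have := hpair _ hb1 _ hb2 hne
    have := Finset.card_le_card hsub
    omega
  · -- J \ I = {e}, so J = insert e I ∈ bad, contradiction
    push_neg at h2
    have hJsub : J ⊆ insert e I := by
      intro x hxJ
      rcases Finset.mem_insert.2 (by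
        by_cases hxI : x ∈ I
        · exact Or.inr hxI
        · exact Or.inl (h2 x hxJ hxI)) with h
      exact h
    have hJeq : J = insert e I := by
      apply Finset.eq_of_subset_of_card_le hJsub
      rw [Finset.card_insert_of_notMem heI]
      omega
    exact hJ.2 (hJeq ▸ hall e heJ heI)

/-- The paving matroid on `Fin 7` with dependent triples `bad`. -/
def Mat (bad : Finset (Finset (Fin 7))) (h3 : ∀ G ∈ bad, G.card = 3)
    (hpair : ∀ G ∈ bad, ∀ G' ∈ bad, G ≠ G' → (G ∩ G').card ≤ 1) : Matroid (Fin 7) :=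
  (IndepMatroid.ofFinset univ (Ok bad)
    ⟨by simp, fun h => by simpa using h3 ∅ h⟩
    (fun I J hJ hIJ => hJ.subset h3 hIJ)
    (fun I J hI hJ hlt => Ok.aug h3 hpair hI hJ hlt)
    (fun I _ => Set.subset_univ _)).matroid

variable {bad : Finset (Finset (Fin 7))} {h3 : ∀ G ∈ bad, G.card = 3}
    {hpair : ∀ G ∈ bad, ∀ G' ∈ bad, G ≠ G' → (G ∩ G').card ≤ 1}

@[simp] theorem Mat_E : (Mat bad h3 hpair).E = univ := rfl

theorem Mat_indep_iff {I : Set (Fin 7)} :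
    (Mat bad h3 hpair).Indep I ↔ ∀ J : Finset (Fin 7), ↑J ⊆ I → Ok bad J := by
  rw [Mat, IndepMatroid.matroid_indep_iff]
  exact IndepMatroid.ofFinset_indep' ..

theorem Mat_indep_coe {F : Finset (Fin 7)} :
    (Mat bad h3 hpair).Indep ↑F ↔ Ok bad F := by
  rw [Mat, IndepMatroid.matroid_indep_iff]
  exact IndepMatroid.ofFinset_indep ..
section Part3
variable {bad : Finset (Finset (Fin 7))} {h3 : ∀ G ∈ bad, G.card = 3}
    {hpair : ∀ G ∈ bad, ∀ G' ∈ bad, G ≠ G' → (G ∩ G').card ≤ 1}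

theorem mRank_Mat_le {S : Finset (Fin 7)} {k : ℕ}
    (h : ∀ F ∈ S.powerset, Ok bad F → F.card ≤ k) :
    mRank (Mat bad h3 hpair) ↑S ≤ (k : ℕ∞) := by
  refine mRank_le fun I hI hIS => ?_
  have hfin : I.Finite := I.toFinite
  have hok : Ok bad hfin.toFinset :=
    (Mat_indep_iff.1 hI) hfin.toFinset (by rw [hfin.coe_toFinset])
  have hsub : hfin.toFinset ∈ S.powerset := by
    rw [Finset.mem_powerset, ← Finset.coe_subset, hfin.coe_toFinset]
    exact hIS
  calc I.encard = (hfin.toFinset.card : ℕ∞) := by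
        rw [← Set.encard_coe_eq_coe_finsetCard, hfin.coe_toFinset]
    _ ≤ (k : ℕ∞) := by exact_mod_cast h _ hsub hok

theorem mRank_Mat_ge {S F : Finset (Fin 7)} (hFS : F ⊆ S) (hF : Ok bad F) :
    (F.card : ℕ∞) ≤ mRank (Mat bad h3 hpair) ↑S := by
  rw [← Set.encard_coe_eq_coe_finsetCard]
  exact le_mRank (Mat_indep_coe.2 hF) (Finset.coe_subset.2 hFS)

theorem mRank_Mat_eq {S : Finset (Fin 7)} {k : ℕ}
    (hex : ∃ F ∈ S.powerset, Ok bad F ∧ F.card = k)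
    (h : ∀ F ∈ S.powerset, Ok bad F → F.card ≤ k) :
    mRank (Mat bad h3 hpair) ↑S = (k : ℕ∞) := by
  obtain ⟨F, hFS, hokF, hcard⟩ := hex
  exact le_antisymm (mRank_Mat_le h) (hcard ▸ mRank_Mat_ge (Finset.mem_powerset.1 hFS) hokF)

theorem mRank_Mat_univ_le : mRank (Mat bad h3 hpair) Set.univ ≤ (3 : ℕ∞) := by
  rw [show (Set.univ : Set (Fin 7)) = ↑(Finset.univ : Finset (Fin 7)) by simp]
  exact mRank_Mat_le fun F _ hF => hF.1

end Part3

/-- Dependent triples of the first test matroid. -/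
def badA : Finset (Finset (Fin 7)) := {{0,3,6},{1,2,6}}
/-- Dependent triples of the second test matroid. -/
def badB : Finset (Finset (Fin 7)) := {{0,3,6},{1,2,6},{4,5,6}}

theorem badA3 : ∀ G ∈ badA, G.card = 3 := by decide
theorem badApair : ∀ G ∈ badA, ∀ G' ∈ badA, G ≠ G' → (G ∩ G').card ≤ 1 := by decide
theorem badB3 : ∀ G ∈ badB, G.card = 3 := by decide
theorem badBpair : ∀ G ∈ badB, ∀ G' ∈ badB, G ≠ G' → (G ∩ G').card ≤ 1 := by decide

/-- The non-Fano-like matroid. -/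
noncomputable def MA : Matroid (Fin 7) := Mat badA badA3 badApair
/-- The Fano-like matroid. -/
noncomputable def MB : Matroid (Fin 7) := Mat badB badB3 badBpair

theorem indep_agree {S : Set (Fin 7)} (h6 : (6 : Fin 7) ∉ S) : MA.Indep S ↔ MB.Indep S := by
  rw [MA, MB, Mat_indep_iff, Mat_indep_iff]
  have key : ∀ J : Finset (Fin 7), (6 : Fin 7) ∉ J → (Ok badA J ↔ Ok badB J) := by decide
  constructor <;> intro h J hJS <;>
    [exact (key J fun h6J => h6 (hJS h6J)).1 (h J hJS);
     exact (key J fun h6J => h6 (hJS h6J)).2 (h J hJS)]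

theorem MA_rank {S : Finset (Fin 7)} {k : ℕ}
    (hex : ∃ F ∈ S.powerset, Ok badA F ∧ F.card = k)
    (h : ∀ F ∈ S.powerset, Ok badA F → F.card ≤ k) : mRank MA ↑S = (k : ℕ∞) :=
  mRank_Mat_eq hex h

theorem MB_rank {S : Finset (Fin 7)} {k : ℕ}
    (hex : ∃ F ∈ S.powerset, Ok badB F ∧ F.card = k)
    (h : ∀ F ∈ S.powerset, Ok badB F → F.card ≤ k) : mRank MB ↑S = (k : ℕ∞) :=
  mRank_Mat_eq hex h

/-- For every `n ≥ 7` and every host matroid `N`, there is no online matroid morphism from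
the class of matroids of rank at most `3` with at most `n` elements into `N`. -/
theorem stmt12 (n : ℕ) (hn : 7 ≤ n) (β : Type*) (N : Matroid β) :
    ¬ OMMof (fun m M => m ≤ n ∧ M.E = univ ∧ mRank M univ ≤ 3) N := by
  rintro ⟨f, hrank, hcons⟩
  have h67 : (6 : ℕ) ≤ 7 := by omega
  have hMAmem : 7 ≤ n ∧ MA.E = univ ∧ mRank MA univ ≤ 3 :=
    ⟨hn, rfl, mRank_Mat_univ_le⟩
  have hMBmem : 7 ≤ n ∧ MB.E = univ ∧ mRank MB univ ≤ 3 :=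
    ⟨hn, rfl, mRank_Mat_univ_le⟩
  -- the two matroids have the same 6-element prefix
  have hpre : prefixMatroid h67 MA = prefixMatroid h67 MB := by
    refine Matroid.ext_indep rfl fun I _ => ?_
    rw [prefixMatroid, prefixMatroid, Matroid.comap_indep_iff, Matroid.comap_indep_iff]
    have h6 : (6 : Fin 7) ∉ Fin.castLE h67 '' I := by
      rintro ⟨i, -, hi⟩
      have hv := congrArg Fin.val hi
      have : i.val < 6 := i.isLt
      simp only [Fin.coe_castLE] at hv
      omega
    rw [indep_agree h6]
  -- hence the maps agree on the first six elements
  have hag : ∀ i : Fin 6, f 7 MA (Fin.castLE h67 i) = f 7 MB (Fin.castLE h67 i) := by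
    intro i
    rw [← hcons 6 7 h67 MA hMAmem i, hpre, hcons 6 7 h67 MB hMBmem i]
  set fA := f 7 MA with hfA
  set fB := f 7 MB with hfB
  have e0 : fA 0 = fB 0 := hag 0
  have e1 : fA 1 = fB 1 := hag 1
  have e2 : fA 2 = fB 2 := hag 2
  have e3 : fA 3 = fB 3 := hag 3
  have e4 : fA 4 = fB 4 := hag 4
  have e5 : fA 5 = fB 5 := hag 5
  have hrkA : ∀ S : Set (Fin 7), mRank N (fA '' S) = mRank MA S := fun S =>
    hrank 7 MA hMAmem S (subset_univ S)
  have hrkB : ∀ S : Set (Fin 7), mRank N (fB '' S) = mRank MB S := fun S =>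
    hrank 7 MB hMBmem S (subset_univ S)
  -- abbreviations for the images
  set a0 := fA 0; set a1 := fA 1; set a2 := fA 2
  set a3 := fA 3; set a4 := fA 4; set a5 := fA 5
  set c := fA 6; set d := fB 6
  -- host rank facts
  have imA : ∀ x y z : Fin 7, fA '' ↑({x, y, z} : Finset (Fin 7)) = {fA x, fA y, fA z} := by
    intro x y z
    simp [Set.image_insert_eq]
  have imB : ∀ x y z : Fin 7, fB '' ↑({x, y, z} : Finset (Fin 7)) = {fB x, fB y, fB z} := by
    intro x y z
    simp [Set.image_insert_eq]
  have imA2 : ∀ x y : Fin 7, fA '' ↑({x, y} : Finset (Fin 7)) = {fA x, fA y} := by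
    intro x y; simp [Set.image_insert_eq]
  have HP : mRank N {a0, a3} = 2 := by
    have h := hrkA ↑({0, 3} : Finset (Fin 7))
    rw [imA2, MA_rank (k := 2) (by decide) (by decide)] at h
    exact h
  have HQ : mRank N {a1, a2} = 2 := by
    have h := hrkA ↑({1, 2} : Finset (Fin 7))
    rw [imA2, MA_rank (k := 2) (by decide) (by decide)] at h
    exact h
  have H1 : mRank N {a0, a3, c} = 2 := by
    have h := hrkA ↑({0, 3, 6} : Finset (Fin 7))
    rw [imA, MA_rank (k := 2) (by decide) (by decide)] at h
    exact h
  have H3 : mRank N {a1, a2, c} = 2 := by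
    have h := hrkA ↑({1, 2, 6} : Finset (Fin 7))
    rw [imA, MA_rank (k := 2) (by decide) (by decide)] at h
    exact h
  have H012 : mRank N {a0, a1, a2} = 3 := by
    have h := hrkA ↑({0, 1, 2} : Finset (Fin 7))
    rw [imA, MA_rank (k := 3) (by decide) (by decide)] at h
    exact h
  have H456A : mRank N {a4, a5, c} = 3 := by
    have h := hrkA ↑({4, 5, 6} : Finset (Fin 7))
    rw [imA, MA_rank (k := 3) (by decide) (by decide)] at h
    exact h
  have H2 : mRank N {a0, a3, d} = 2 := by
    have h := hrkB ↑({0, 3, 6} : Finset (Fin 7))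
    rw [imB, MB_rank (k := 2) (by decide) (by decide), ← e0, ← e3] at h
    exact h
  have H4 : mRank N {a1, a2, d} = 2 := by
    have h := hrkB ↑({1, 2, 6} : Finset (Fin 7))
    rw [imB, MB_rank (k := 2) (by decide) (by decide), ← e1, ← e2] at h
    exact h
  have H456B : mRank N {a4, a5, d} = 2 := by
    have h := hrkB ↑({4, 5, 6} : Finset (Fin 7))
    rw [imB, MB_rank (k := 2) (by decide) (by decide), ← e4, ← e5] at h
    exact h
  have H6B : mRank N {d} = 1 := by
    have h := hrkB ↑({6} : Finset (Fin 7))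
    rw [MB_rank (k := 1) (by decide) (by decide),
      show (fB '' ↑({6} : Finset (Fin 7))) = {d} by simp; rfl] at h
    exact h
  -- Step 1 : mRank N ({a0,a3,c} ∪ {a0,a3,d}) ≤ 2
  have step1 : mRank N ({a0, a3, c} ∪ {a0, a3, d}) ≤ 2 := by
    have s := mRank_submod (M := N) {a0, a3, c} {a0, a3, d}
    have l : (2 : ℕ∞) ≤ mRank N ({a0, a3, c} ∩ {a0, a3, d}) := by
      rw [← HP]
      refine mRank_mono fun x hx => ?_
      simp only [Set.mem_insert_iff, Set.mem_singleton_iff, Set.mem_union, Set.mem_inter_iff]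
        at hx ⊢
      tauto
    have key : mRank N ({a0, a3, c} ∪ {a0, a3, d}) + 2 ≤ 2 + 2 := by
      calc mRank N ({a0, a3, c} ∪ {a0, a3, d}) + 2
          ≤ mRank N ({a0, a3, c} ∪ {a0, a3, d}) + mRank N ({a0, a3, c} ∩ {a0, a3, d}) :=
            add_le_add_right l _
        _ ≤ mRank N {a0, a3, c} + mRank N {a0, a3, d} := s
        _ = 2 + 2 := by rw [H1, H2]
    exact (WithTop.add_le_add_iff_right (by decide)).1 key
  have step2 : mRank N ({a1, a2, c} ∪ {a1, a2, d}) ≤ 2 := by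
    have s := mRank_submod (M := N) {a1, a2, c} {a1, a2, d}
    have l : (2 : ℕ∞) ≤ mRank N ({a1, a2, c} ∩ {a1, a2, d}) := by
      rw [← HQ]
      refine mRank_mono fun x hx => ?_
      simp only [Set.mem_insert_iff, Set.mem_singleton_iff, Set.mem_union, Set.mem_inter_iff]
        at hx ⊢
      tauto
    have key : mRank N ({a1, a2, c} ∪ {a1, a2, d}) + 2 ≤ 2 + 2 := by
      calc mRank N ({a1, a2, c} ∪ {a1, a2, d}) + 2
          ≤ mRank N ({a1, a2, c} ∪ {a1, a2, d}) + mRank N ({a1, a2, c} ∩ {a1, a2, d}) :=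
            add_le_add_right l _
        _ ≤ mRank N {a1, a2, c} + mRank N {a1, a2, d} := s
        _ = 2 + 2 := by rw [H3, H4]
    exact (WithTop.add_le_add_iff_right (by decide)).1 key
  -- Step 3 : mRank N {c, d} ≤ 1
  have step3 : mRank N {c, d} ≤ 1 := by
    have s := mRank_submod (M := N) ({a0, a3, c} ∪ {a0, a3, d}) ({a1, a2, c} ∪ {a1, a2, d})
    have l1 : (3 : ℕ∞) ≤
        mRank N (({a0, a3, c} ∪ {a0, a3, d}) ∪ ({a1, a2, c} ∪ {a1, a2, d})) := by
      rw [← H012]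
      refine mRank_mono fun x hx => ?_
      simp only [Set.mem_insert_iff, Set.mem_singleton_iff, Set.mem_union, Set.mem_inter_iff]
        at hx ⊢
      tauto
    have l2 : mRank N {c, d} ≤
        mRank N (({a0, a3, c} ∪ {a0, a3, d}) ∩ ({a1, a2, c} ∪ {a1, a2, d})) := by
      refine mRank_mono fun x hx => ?_
      simp only [Set.mem_insert_iff, Set.mem_singleton_iff, Set.mem_union, Set.mem_inter_iff]
        at hx ⊢
      tauto
    have key : (3 : ℕ∞) + mRank N {c, d} ≤ 3 + 1 := by
      calc (3 : ℕ∞) + mRank N {c, d}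
          ≤ mRank N (({a0, a3, c} ∪ {a0, a3, d}) ∪ ({a1, a2, c} ∪ {a1, a2, d}))
            + mRank N (({a0, a3, c} ∪ {a0, a3, d}) ∩ ({a1, a2, c} ∪ {a1, a2, d})) :=
            add_le_add l1 l2
        _ ≤ mRank N ({a0, a3, c} ∪ {a0, a3, d}) + mRank N ({a1, a2, c} ∪ {a1, a2, d}) := s
        _ ≤ 2 + 2 := add_le_add step1 step2
        _ = 3 + 1 := by decide
    exact (WithTop.add_le_add_iff_left (by decide)).1 key
  -- Step 4 : contradiction
  have s := mRank_submod (M := N) {a4, a5, d} {c, d}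
  have l1 : (3 : ℕ∞) ≤ mRank N ({a4, a5, d} ∪ {c, d}) := by
    rw [← H456A]
    refine mRank_mono fun x hx => ?_
    simp only [Set.mem_insert_iff, Set.mem_singleton_iff, Set.mem_union, Set.mem_inter_iff]
      at hx ⊢
    tauto
  have l2 : (1 : ℕ∞) ≤ mRank N ({a4, a5, d} ∩ {c, d}) := by
    rw [← H6B]
    refine mRank_mono fun x hx => ?_
    simp only [Set.mem_insert_iff, Set.mem_singleton_iff, Set.mem_union, Set.mem_inter_iff]
      at hx ⊢
    tauto
  have : (4 : ℕ∞) ≤ 3 := by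
    calc (4 : ℕ∞) = 3 + 1 := by decide
      _ ≤ mRank N ({a4, a5, d} ∪ {c, d}) + mRank N ({a4, a5, d} ∩ {c, d}) := add_le_add l1 l2
      _ ≤ mRank N {a4, a5, d} + mRank N {c, d} := s
      _ ≤ 2 + 1 := add_le_add H456B.le step3
      _ = 3 := by decide
  exact absurd this (by decide)
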